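/- The operator Z acts bidiagonally on the Pastro polynomial basis: for every positive integer n and all real x ≠ 0, (1 - q x^{-1}) P_n(q^{-1}x; a, b; q) + (q x^{-1} - b) P_n(x; a, b; q) = q^{-n} (1 - b q^n) P_n(x; a, b; q) + [ b q (1 - q^{-n})(1 - a q^{n-1}) / ( a (1 - b q^{n-1}) ) ] P_{n-1}(x; a, b; q). -/

import Mathlib

/-- The q-Pochhammer symbol `(z;q)_k = ∏_{j=0}^{k-1} (1 - z q^j)`. -/
noncomputable def qPoch (q z : ℝ) (k : ℕ) : ℝ :=
  ∏ j ∈ Finset.range k, (1 - z * q ^ j)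

/-- Coefficient `c_{n,k}` of the monic Pastro polynomial. -/
noncomputable def pastroCoeff (q a b : ℝ) (n k : ℕ) : ℝ :=
  (qPoch q (a⁻¹ * b * q ^ (1 - (n : ℤ))) n * qPoch q q n /
      (qPoch q (q ^ (-(n : ℤ))) n * qPoch q b n)) *
    (qPoch q (q ^ (-(n : ℤ))) k * qPoch q b k /
      (qPoch q (a⁻¹ * b * q ^ (1 - (n : ℤ))) k * qPoch q q k))

/-- The monic Pastro polynomial `P_n(x;a,b;q)`. -/
noncomputable def pastroP (q a b : ℝ) (n : ℕ) (x : ℝ) : ℝ :=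
  ∑ k ∈ Finset.range (n + 1), pastroCoeff q a b n k * x ^ k

lemma qPoch_succ (q z : ℝ) (k : ℕ) :
    qPoch q z (k + 1) = qPoch q z k * (1 - z * q ^ k) :=
  Finset.prod_range_succ _ _

lemma qPoch_succ' (q z : ℝ) (k : ℕ) :
    qPoch q z (k + 1) = (1 - z) * qPoch q (z * q) k := by
  unfold qPoch
  rw [Finset.prod_range_succ']
  simp only [pow_zero, mul_one]
  rw [mul_comm]
  congr 1
  apply Finset.prod_congr rfl
  intro i _
  ring

lemma qPoch_shift (q z : ℝ) (k : ℕ) :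
    (1 - z) * qPoch q (z * q) k = qPoch q z k * (1 - z * q ^ k) := by
  rw [← qPoch_succ', qPoch_succ]

lemma qPoch_ne_zero {q z : ℝ} {k : ℕ} (h : ∀ j < k, z * q ^ j ≠ 1) :
    qPoch q z k ≠ 0 := by
  unfold qPoch
  rw [Finset.prod_ne_zero_iff]
  intro i hi
  rw [sub_ne_zero]
  exact fun hc => h i (Finset.mem_range.mp hi) hc.symm

set_option maxHeartbeats 2000000 in
lemma pastro_key (q a b : ℝ) (hq : q ≠ 0) (hq1 : ∀ k : ℤ, k ≠ 0 → q ^ k ≠ 1)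
    (ha : a ≠ 0) (hb : b ≠ 0)
    (hbq : ∀ m : ℤ, b * q ^ m ≠ 1) (habq : ∀ m : ℤ, a⁻¹ * b * q ^ m ≠ 1)
    (m k : ℕ) (hk : k ≤ m + 1) :
    (q ^ k)⁻¹ * pastroCoeff q a b (m + 1) k - b * pastroCoeff q a b (m + 1) k
      + (q - (q ^ k)⁻¹) * pastroCoeff q a b (m + 1) (k + 1)
    = q ^ (-((m + 1 : ℕ) : ℤ)) * (1 - b * q ^ (m + 1)) * pastroCoeff q a b (m + 1) k
      + b * q * (1 - q ^ (-((m + 1 : ℕ) : ℤ))) * (1 - a * q ^ (((m + 1 : ℕ) : ℤ) - 1)) /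
          (a * (1 - b * q ^ (((m + 1 : ℕ) : ℤ) - 1))) * pastroCoeff q a b m k := by
  set w := q ^ m with hw
  have hw0 : w ≠ 0 := pow_ne_zero _ hq
  have hu0 : (q : ℝ) ^ k ≠ 0 := pow_ne_zero _ hq
  have hzw : ∀ j : ℕ, w⁻¹ * q ^ j = q ^ ((j : ℤ) - (m : ℤ)) := by
    intro j
    rw [zpow_sub₀ hq, zpow_natCast, zpow_natCast, hw]
    ring
  have hzwq : ∀ j : ℕ, (w * q)⁻¹ * q ^ j = q ^ ((j : ℤ) - ((m : ℤ) + 1)) := by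
    intro j
    rw [show (j : ℤ) - ((m : ℤ) + 1) = (j : ℤ) - (m : ℤ) - 1 by ring,
      zpow_sub_one₀ hq, ← hzw j]
    field_simp
  have e1 : q ^ (1 - ((m + 1 : ℕ) : ℤ)) = w⁻¹ := by
    rw [show (1 - ((m + 1 : ℕ) : ℤ)) = -(m : ℤ) by push_cast; ring, zpow_neg, zpow_natCast, hw]
  have e2 : q ^ (-((m + 1 : ℕ) : ℤ)) = (w * q)⁻¹ := by
    rw [zpow_neg, zpow_natCast, pow_succ, hw]
  have e3 : q ^ (((m + 1 : ℕ) : ℤ) - 1) = w := by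
    rw [show (((m + 1 : ℕ) : ℤ) - 1) = (m : ℤ) by push_cast; ring, zpow_natCast, hw]
  have e4 : q ^ (1 - (m : ℤ)) = w⁻¹ * q := by
    rw [show (1 - (m : ℤ)) = -(m : ℤ) + 1 by ring, zpow_add_one₀ hq, zpow_neg, zpow_natCast, hw]
  have e5 : q ^ (-(m : ℤ)) = w⁻¹ := by
    rw [zpow_neg, zpow_natCast, hw]
  have e6 : q ^ (m + 1) = w * q := by rw [pow_succ, hw]
  -- nonzeroness of the "1 - ·" factors
  have h1α : 1 - a⁻¹ * b * w⁻¹ ≠ 0 := by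
    have := habq (-(m : ℤ))
    rw [e5] at this
    exact sub_ne_zero_of_ne (Ne.symm this)
  have h1wq : 1 - (w * q)⁻¹ ≠ 0 := by
    rw [← e2]
    exact sub_ne_zero_of_ne (Ne.symm (hq1 _ (by omega)))
  have h1qw : 1 - q * w ≠ 0 := by
    have h := hq1 ((m : ℤ) + 1) (by omega)
    rw [show ((m : ℤ) + 1) = ((m + 1 : ℕ) : ℤ) by push_cast; ring, zpow_natCast, e6] at h
    exact sub_ne_zero_of_ne (Ne.symm (by rwa [mul_comm q w]))
  have h1bw : 1 - b * w ≠ 0 := by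
    have h := hbq (m : ℤ)
    rw [zpow_natCast, ← hw] at h
    exact sub_ne_zero_of_ne (Ne.symm h)
  have h1αu : 1 - a⁻¹ * b * w⁻¹ * q ^ k ≠ 0 := by
    rw [show a⁻¹ * b * w⁻¹ * q ^ k = a⁻¹ * b * (w⁻¹ * q ^ k) by ring, hzw k]
    exact sub_ne_zero_of_ne (Ne.symm (habq _))
  have h1qu : 1 - q * q ^ k ≠ 0 := by
    rw [show q * q ^ k = q ^ ((k : ℤ) + 1) by rw [zpow_add_one₀ hq, zpow_natCast]; ring]
    exact sub_ne_zero_of_ne (Ne.symm (hq1 _ (by omega)))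
  have hPα : qPoch q (a⁻¹ * b * w⁻¹) (m + 1) ≠ 0 :=
    qPoch_ne_zero fun j _ => by rw [mul_assoc, hzw j]; exact habq _
  have hV : qPoch q (a⁻¹ * b * w⁻¹) k ≠ 0 :=
    qPoch_ne_zero fun j _ => by rw [mul_assoc, hzw j]; exact habq _
  have hPQ : qPoch q ((w * q)⁻¹) (m + 1) ≠ 0 :=
    qPoch_ne_zero fun j hj => by rw [hzwq j]; exact hq1 _ (by omega)
  have hU : qPoch q ((w * q)⁻¹) k ≠ 0 :=
    qPoch_ne_zero fun j hj => by rw [hzwq j]; exact hq1 _ (by omega)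
  have hPq : qPoch q q (m + 1) ≠ 0 :=
    qPoch_ne_zero fun j _ => by
      rw [show q * q ^ j = q ^ ((j : ℤ) + 1) by rw [zpow_add_one₀ hq, zpow_natCast]; ring]
      exact hq1 _ (by omega)
  have hQk : qPoch q q k ≠ 0 :=
    qPoch_ne_zero fun j _ => by
      rw [show q * q ^ j = q ^ ((j : ℤ) + 1) by rw [zpow_add_one₀ hq, zpow_natCast]; ring]
      exact hq1 _ (by omega)
  have hPb : qPoch q b (m + 1) ≠ 0 :=
    qPoch_ne_zero fun j _ => by
      rw [show (q : ℝ) ^ j = q ^ (j : ℤ) from (zpow_natCast q j).symm]; exact hbq _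
  have hBk : qPoch q b k ≠ 0 :=
    qPoch_ne_zero fun j _ => by
      rw [show (q : ℝ) ^ j = q ^ (j : ℤ) from (zpow_natCast q j).symm]; exact hbq _
  have hm1 : qPoch q (a⁻¹ * b * (w⁻¹ * q)) m
      = qPoch q (a⁻¹ * b * w⁻¹) (m + 1) / (1 - a⁻¹ * b * w⁻¹) := by
    rw [qPoch_succ', show a⁻¹ * b * w⁻¹ * q = a⁻¹ * b * (w⁻¹ * q) by ring,
      mul_div_cancel_left₀ _ h1α]
  have hm2 : qPoch q w⁻¹ m = qPoch q ((w * q)⁻¹) (m + 1) / (1 - (w * q)⁻¹) := by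
    rw [qPoch_succ', show (w * q)⁻¹ * q = w⁻¹ by rw [mul_comm w q, mul_inv_rev, mul_assoc, inv_mul_cancel₀ hq, mul_one], mul_div_cancel_left₀ _ h1wq]
  have hm3 : qPoch q q m = qPoch q q (m + 1) / (1 - q * w) := by
    rw [qPoch_succ, ← hw, mul_div_cancel_right₀ _ h1qw]
  have hm4 : qPoch q b m = qPoch q b (m + 1) / (1 - b * w) := by
    rw [qPoch_succ, ← hw, mul_div_cancel_right₀ _ h1bw]
  have hmk1 : qPoch q (a⁻¹ * b * (w⁻¹ * q)) k
      = qPoch q (a⁻¹ * b * w⁻¹) k * (1 - a⁻¹ * b * w⁻¹ * q ^ k) / (1 - a⁻¹ * b * w⁻¹) := by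
    have h := qPoch_shift q (a⁻¹ * b * w⁻¹) k
    rw [show a⁻¹ * b * w⁻¹ * q = a⁻¹ * b * (w⁻¹ * q) by ring] at h
    rw [← h, mul_div_cancel_left₀ _ h1α]
  have hmk2 : qPoch q w⁻¹ k
      = qPoch q ((w * q)⁻¹) k * (1 - (w * q)⁻¹ * q ^ k) / (1 - (w * q)⁻¹) := by
    have h := qPoch_shift q ((w * q)⁻¹) k
    rw [show (w * q)⁻¹ * q = w⁻¹ by rw [mul_comm w q, mul_inv_rev, mul_assoc, inv_mul_cancel₀ hq, mul_one]] at h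
    rw [← h, mul_div_cancel_left₀ _ h1wq]
  simp only [pastroCoeff, e1, e2, e3, e4, e5, e6]
  rw [qPoch_succ q (a⁻¹ * b * w⁻¹) k, qPoch_succ q ((w * q)⁻¹) k, qPoch_succ q b k,
    qPoch_succ q q k, hm1, hm2, hm3, hm4, hmk1, hmk2]
  set Pa := qPoch q (a⁻¹ * b * w⁻¹) (m + 1) with hPad
  set PQa := qPoch q ((w * q)⁻¹) (m + 1) with hPQd
  set Pq2 := qPoch q q (m + 1) with hPqd
  set Pb2 := qPoch q b (m + 1) with hPbd
  set V2 := qPoch q (a⁻¹ * b * w⁻¹) k with hVd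
  set U2 := qPoch q ((w * q)⁻¹) k with hUd
  set Qk2 := qPoch q q k with hQkd
  set Bk2 := qPoch q b k with hBkd
  set u := q ^ k with hud
  clear_value w Pa PQa Pq2 Pb2 V2 U2 Qk2 Bk2 u
  have h1a' : a * w - b ≠ 0 := by
    intro h
    rw [sub_eq_zero] at h
    apply h1α
    rw [← h]
    field_simp
    norm_num
  have h1wq' : w * q - 1 ≠ 0 := by
    intro h
    rw [sub_eq_zero] at h
    apply h1wq
    rw [h]
    simp
  have h1au' : a * w - b * u ≠ 0 := by
    intro h
    rw [sub_eq_zero] at h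
    apply h1αu
    rw [sub_eq_zero]
    field_simp
    linarith [h]
  have h1au'' : w * a - u * b ≠ 0 := by rw [mul_comm w a, mul_comm u b]; exact h1au'
  have h1qu' : 1 - u * q ≠ 0 := by rw [mul_comm u q]; exact h1qu
  have h1a'' : w * a - b ≠ 0 := by rw [mul_comm w a]; exact h1a'
  field_simp
  ring

lemma pastroCoeff_top_zero (q a b : ℝ) (hq : q ≠ 0) (m : ℕ) :
    pastroCoeff q a b m (m + 1) = 0 := by
  have h : qPoch q (q ^ (-(m : ℤ))) (m + 1) = 0 := by
    rw [qPoch_succ]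
    have : (q : ℝ) ^ (-(m : ℤ)) * q ^ m = 1 := by
      rw [zpow_neg, zpow_natCast]
      field_simp
    rw [this]
    simp
  simp only [pastroCoeff]
  rw [h]
  ring

/-- The operator `Z` acts bidiagonally on the Pastro polynomial basis. -/
theorem pastro_Z_bidiagonal (q a b : ℝ) (hq : q ≠ 0) (hq1 : ∀ k : ℤ, k ≠ 0 → q ^ k ≠ 1)
    (ha : a ≠ 0) (hb : b ≠ 0)
    (hbq : ∀ m : ℤ, b * q ^ m ≠ 1) (habq : ∀ m : ℤ, a⁻¹ * b * q ^ m ≠ 1)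
    (n : ℕ) (hn : 0 < n) (x : ℝ) (hx : x ≠ 0) :
    (1 - q * x⁻¹) * pastroP q a b n (q⁻¹ * x) + (q * x⁻¹ - b) * pastroP q a b n x =
      q ^ (-(n : ℤ)) * (1 - b * q ^ n) * pastroP q a b n x +
        b * q * (1 - q ^ (-(n : ℤ))) * (1 - a * q ^ ((n : ℤ) - 1)) /
            (a * (1 - b * q ^ ((n : ℤ) - 1))) * pastroP q a b (n - 1) x := by
  obtain ⟨m, rfl⟩ : ∃ m, n = m + 1 := ⟨n - 1, (Nat.succ_pred_eq_of_pos hn).symm⟩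
  simp only [Nat.add_sub_cancel]
  have hP' : pastroP q a b m x
      = ∑ k ∈ Finset.range (m + 1 + 1), pastroCoeff q a b m k * x ^ k := by
    rw [pastroP,
      Finset.sum_range_succ (fun k => pastroCoeff q a b m k * x ^ k) (m + 1),
      pastroCoeff_top_zero q a b hq m]
    simp
  rw [hP', pastroP, pastroP, Finset.mul_sum, Finset.mul_sum, Finset.mul_sum, Finset.mul_sum,
    ← Finset.sum_add_distrib, ← Finset.sum_add_distrib]
  have step1 : ∑ k ∈ Finset.range (m + 1 + 1),
      ((1 - q * x⁻¹) * (pastroCoeff q a b (m + 1) k * (q⁻¹ * x) ^ k) +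
        (q * x⁻¹ - b) * (pastroCoeff q a b (m + 1) k * x ^ k))
    = (∑ k ∈ Finset.range (m + 1 + 1),
        ((q ^ k)⁻¹ * pastroCoeff q a b (m + 1) k - b * pastroCoeff q a b (m + 1) k) * x ^ k)
      + ∑ k ∈ Finset.range (m + 1 + 1),
        (q - (q ^ k)⁻¹ * q) * (pastroCoeff q a b (m + 1) k * x ^ k) * x⁻¹ := by
    rw [← Finset.sum_add_distrib]
    refine Finset.sum_congr rfl fun k _ => ?_
    rw [mul_pow, inv_pow]
    ring
  have step2 : ∑ k ∈ Finset.range (m + 1 + 1),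
      (q - (q ^ k)⁻¹ * q) * (pastroCoeff q a b (m + 1) k * x ^ k) * x⁻¹
    = ∑ k ∈ Finset.range (m + 1 + 1),
      (q - (q ^ k)⁻¹) * (pastroCoeff q a b (m + 1) (k + 1) * x ^ k) := by
    rw [Finset.sum_range_succ'
      (fun k : ℕ => ((q - (q ^ k)⁻¹ * q) * (pastroCoeff q a b (m + 1) k * x ^ k) * x⁻¹ : ℝ)) (m + 1)]
    rw [Finset.sum_range_succ
      (fun k : ℕ => ((q - (q ^ k)⁻¹) * (pastroCoeff q a b (m + 1) (k + 1) * x ^ k) : ℝ)) (m + 1)]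
    rw [pastroCoeff_top_zero q a b hq (m + 1)]
    simp only [pow_zero, inv_one, one_mul, sub_self, zero_mul, mul_zero, add_zero]
    refine Finset.sum_congr rfl fun k _ => ?_
    have h1 : ((q : ℝ) ^ (k + 1))⁻¹ * q = (q ^ k)⁻¹ := by
      rw [pow_succ]
      field_simp
    rw [h1, pow_succ]
    field_simp
  rw [step1, step2, ← Finset.sum_add_distrib]
  refine Finset.sum_congr rfl fun k hk => ?_
  have hk' : k ≤ m + 1 := by
    have := Finset.mem_range.mp hk
    omega
  have key := pastro_key q a b hq hq1 ha hb hbq habq m k hk'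
  linear_combination key * x ^ k
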